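/- Let μ_on, μ_off > 0 and d ≥ 0. Then e^{-μ_on·d} + ∫_{t=0}^{d} (μ_on·μ_off/(μ_on+μ_off))·(1 - e^{-(μ_on+μ_off)t})·e^{-μ_on(d-t)} dt = (μ_off + μ_on·e^{-(μ_on+μ_off)d})/(μ_on+μ_off). (This establishes the paper's closed form α_11 for the probability that the PNP is ON at both endpoints of a slot: either a single ON period covers the slot, or some ON-OFF pairs of total duration t are followed by an ON period covering the remaining time d - t.) -/

import Mathlib

/-- Closed form for `α_11`: the probability that the PNP is ON at both endpoints of a
slot of duration `d` is the probability `e^{-μon d}` that a single ON period covers the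
slot plus the renewal integral, and this equals
`(μoff + μon e^{-(μon+μoff) d})/(μon+μoff)`. -/
theorem alpha_one_one_closed_form
    (μon μoff d : ℝ) (hon : 0 < μon) (hoff : 0 < μoff) (hd : 0 ≤ d) :
    Real.exp (-μon * d) +
      ∫ t in (0:ℝ)..d,
        (μon * μoff / (μon + μoff)) * (1 - Real.exp (-(μon + μoff) * t)) *
          Real.exp (-μon * (d - t))
    = (μoff + μon * Real.exp (-(μon + μoff) * d)) / (μon + μoff) := by
  have hS : 0 < μon + μoff := by linarith
  set c : ℝ := μon * μoff / (μon + μoff) with hc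
  set F : ℝ → ℝ := fun t =>
    (c * Real.exp (-μon * d)) * (Real.exp (μon * t) / μon + Real.exp (-μoff * t) / μoff)
    with hF
  have hderiv : ∀ t ∈ Set.uIcc (0:ℝ) d, HasDerivAt F
      (c * (1 - Real.exp (-(μon + μoff) * t)) * Real.exp (-μon * (d - t))) t := by
    intro t _
    have h1 : HasDerivAt (fun t : ℝ => Real.exp (μon * t)) (Real.exp (μon * t) * μon) t :=
      by simpa using ((hasDerivAt_id t).const_mul μon).exp
    have h2 : HasDerivAt (fun t : ℝ => Real.exp (-μoff * t))
        (Real.exp (-μoff * t) * (-μoff)) t :=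
      by simpa using ((hasDerivAt_id t).const_mul (-μoff)).exp
    have h := (((h1.div_const μon).add (h2.div_const μoff)).const_mul
      (c * Real.exp (-μon * d)))
    refine h.congr_deriv ?_; symm
    have e1 : Real.exp (-μon * (d - t)) = Real.exp (-μon * d) * Real.exp (μon * t) := by
      rw [← Real.exp_add]; ring_nf
    have e2 : Real.exp (-μoff * t) = Real.exp (-(μon + μoff) * t) * Real.exp (μon * t) := by
      rw [← Real.exp_add]; ring_nf
    rw [e1, e2]
    field_simp
    ring
  have hcont : IntervalIntegrable
      (fun t => c * (1 - Real.exp (-(μon + μoff) * t)) * Real.exp (-μon * (d - t)))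
      MeasureTheory.volume 0 d := by
    apply Continuous.intervalIntegrable
    continuity
  have hint := intervalIntegral.integral_eq_sub_of_hasDerivAt hderiv hcont
  rw [hint, hF]
  simp only []
  have e3 : Real.exp (μon * d) = (Real.exp (-μon * d))⁻¹ := by
    rw [← Real.exp_neg]; ring_nf
  have e4 : Real.exp (-(μon + μoff) * d) = Real.exp (-μon * d) * Real.exp (-μoff * d) := by
    rw [← Real.exp_add]; ring_nf
  rw [hc, e3, e4]
  have hA : Real.exp (-μon * d) ≠ 0 := (Real.exp_pos _).ne'
  field_simp
  simp only [mul_zero, zero_mul, neg_zero, Real.exp_zero]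
  ring
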